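/- For c ∈ ℂ, let p_c : ℂ → ℂ be the quadratic polynomial p_c(z) = z² + c, and let p_c^[n] denote its n-th iterate. For every R > 0 and every polynomial λ ∈ ℂ[X], there exists B ∈ ℝ such that for every n ≥ 1 and every c ∈ ℂ with ‖c‖ ≤ R, one has 2^{−n} · Real.log ‖(deriv (p_c^[n]))(c) − λ.eval c‖ ≤ B. -/

import Mathlib

open Polynomial

private lemma hasDerivAt_iter (c z : ℂ) (n : ℕ) :
    HasDerivAt ((fun z : ℂ => z ^ 2 + c)^[n])
      (∏ k ∈ Finset.range n, (2 * (fun z : ℂ => z ^ 2 + c)^[k] z)) z := by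
  induction n with
  | zero => simpa using hasDerivAt_id z
  | succ n ih =>
    rw [Function.iterate_succ']
    have hf : HasDerivAt (fun z : ℂ => z ^ 2 + c)
        (2 * (fun z : ℂ => z ^ 2 + c)^[n] z) ((fun z : ℂ => z ^ 2 + c)^[n] z) := by
      simpa using (hasDerivAt_pow 2 ((fun z : ℂ => z ^ 2 + c)^[n] z)).add_const c
    have h := hf.comp z ih
    rw [Finset.prod_range_succ]
    exact h.congr_deriv (by ring)

private lemma iter_bound {R : ℝ} (hR : 0 < R) {c : ℂ} (hc : ‖c‖ ≤ R) (k : ℕ) :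
    ‖(fun z : ℂ => z ^ 2 + c)^[k] c‖ + 1 ≤ (R + 2) ^ (2 ^ k) := by
  induction k with
  | zero =>
    simp only [Function.iterate_zero, id_eq, pow_one, pow_zero]
    linarith
  | succ k ih =>
    rw [Function.iterate_succ_apply']
    have h1 : ‖((fun z : ℂ => z ^ 2 + c)^[k] c) ^ 2 + c‖ ≤
        ‖(fun z : ℂ => z ^ 2 + c)^[k] c‖ ^ 2 + R := by
      calc ‖((fun z : ℂ => z ^ 2 + c)^[k] c) ^ 2 + c‖
          ≤ ‖((fun z : ℂ => z ^ 2 + c)^[k] c) ^ 2‖ + ‖c‖ := norm_add_le _ _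
        _ ≤ ‖(fun z : ℂ => z ^ 2 + c)^[k] c‖ ^ 2 + R := by rw [norm_pow]; linarith
    have hM : (R + 2) ≤ (R + 2) ^ (2 ^ k) :=
      le_self_pow₀ (by linarith) ((Nat.two_pow_pos k).ne')
    have hpow : (R + 2) ^ (2 ^ (k + 1)) = ((R + 2) ^ (2 ^ k)) ^ 2 := by
      rw [← pow_mul, pow_succ]
    have ha : 0 ≤ ‖(fun z : ℂ => z ^ 2 + c)^[k] c‖ := norm_nonneg _
    nlinarith [sq_nonneg (‖(fun z : ℂ => z ^ 2 + c)^[k] c‖ + 1)]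

private lemma sum_two_pow_le (n : ℕ) : ∑ k ∈ Finset.range n, 2 ^ k ≤ 2 ^ n := by
  induction n with
  | zero => simp
  | succ n ih =>
    rw [Finset.sum_range_succ, pow_succ]
    omega

theorem stmt_12 (R : ℝ) (hR : 0 < R) (lam : Polynomial ℂ) :
    ∃ B : ℝ, ∀ n : ℕ, 1 ≤ n → ∀ c : ℂ, ‖c‖ ≤ R →
      ((2 : ℝ) ^ n)⁻¹ *
        Real.log ‖deriv ((fun z : ℂ => z ^ 2 + c)^[n]) c - lam.eval c‖ ≤ B := by
  obtain ⟨L, hL⟩ := (isCompact_closedBall (0 : ℂ) R).exists_bound_of_continuousOn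
    (f := fun c : ℂ => lam.eval c) (lam.continuous_aeval.continuousOn)
  set L' : ℝ := max L 0 with hL'def
  set A : ℝ := 2 * (R + 2) + (L' + 1) with hAdef
  have hA1 : (1 : ℝ) ≤ A := by
    have : (0:ℝ) ≤ L' := le_max_right _ _
    simp only [hAdef]; linarith
  refine ⟨Real.log A, ?_⟩
  intro n hn c hc
  have hderiv : deriv ((fun z : ℂ => z ^ 2 + c)^[n]) c =
      ∏ k ∈ Finset.range n, (2 * (fun z : ℂ => z ^ 2 + c)^[k] c) :=
    (hasDerivAt_iter c c n).deriv
  -- bound on the derivative norm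
  have hD : ‖deriv ((fun z : ℂ => z ^ 2 + c)^[n]) c‖ ≤ (2 * (R + 2)) ^ (2 ^ n) := by
    rw [hderiv, norm_prod]
    have hstep : ∀ k ∈ Finset.range n,
        ‖2 * (fun z : ℂ => z ^ 2 + c)^[k] c‖ ≤ (2 * (R + 2)) ^ (2 ^ k) := by
      intro k _
      have hb := iter_bound hR hc k
      have h2 : ‖(2 : ℂ) * (fun z : ℂ => z ^ 2 + c)^[k] c‖ =
          2 * ‖(fun z : ℂ => z ^ 2 + c)^[k] c‖ := by
        rw [norm_mul]; norm_num
      rw [h2]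
      have hR2 : (0:ℝ) ≤ R + 2 := by linarith
      calc 2 * ‖(fun z : ℂ => z ^ 2 + c)^[k] c‖ ≤ 2 * (R + 2) ^ (2 ^ k) := by linarith
        _ ≤ 2 ^ (2 ^ k) * (R + 2) ^ (2 ^ k) := by
            have h22 : (2:ℝ) ≤ 2 ^ (2 ^ k) :=
              le_self_pow₀ (by norm_num) ((Nat.two_pow_pos k).ne')
            have := pow_nonneg hR2 (2 ^ k)
            nlinarith
        _ = (2 * (R + 2)) ^ (2 ^ k) := (mul_pow _ _ _).symm
    calc ∏ k ∈ Finset.range n, ‖2 * (fun z : ℂ => z ^ 2 + c)^[k] c‖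
        ≤ ∏ k ∈ Finset.range n, (2 * (R + 2)) ^ (2 ^ k) :=
          Finset.prod_le_prod (fun k _ => norm_nonneg _) hstep
      _ = (2 * (R + 2)) ^ (∑ k ∈ Finset.range n, 2 ^ k) := Finset.prod_pow_eq_pow_sum _ _ _
      _ ≤ (2 * (R + 2)) ^ (2 ^ n) :=
          pow_le_pow_right₀ (by linarith) (sum_two_pow_le n)
  -- bound on the polynomial norm
  have hLc : ‖lam.eval c‖ ≤ L' := by
    refine le_trans ?_ (le_max_left L 0)
    exact hL c (by simpa [Metric.mem_closedBall, dist_eq_norm] using hc)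
  have hL'0 : (0:ℝ) ≤ L' := le_max_right _ _
  -- total bound
  have htot : ‖deriv ((fun z : ℂ => z ^ 2 + c)^[n]) c - lam.eval c‖ ≤ A ^ (2 ^ n) := by
    have h1 : ‖deriv ((fun z : ℂ => z ^ 2 + c)^[n]) c - lam.eval c‖ ≤
        (2 * (R + 2)) ^ (2 ^ n) + L' :=
      le_trans (norm_sub_le _ _) (by linarith)
    have h2 : (2 * (R + 2)) ^ (2 ^ n) + (L' + 1) ^ (2 ^ n) ≤ A ^ (2 ^ n) :=
      pow_add_pow_le (by linarith) (by linarith) ((Nat.two_pow_pos n).ne')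
    have h3 : L' + 1 ≤ (L' + 1) ^ (2 ^ n) :=
      le_self_pow₀ (by linarith) ((Nat.two_pow_pos n).ne')
    linarith
  have hApow : Real.log (A ^ (2 ^ n)) = (2 ^ n : ℕ) * Real.log A := by
    rw [Real.log_pow]
  have hlogA : 0 ≤ Real.log A := Real.log_nonneg hA1
  by_cases h0 : ‖deriv ((fun z : ℂ => z ^ 2 + c)^[n]) c - lam.eval c‖ = 0
  · rw [h0, Real.log_zero, mul_zero]
    exact hlogA
  · have hpos : 0 < ‖deriv ((fun z : ℂ => z ^ 2 + c)^[n]) c - lam.eval c‖ :=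
      lt_of_le_of_ne (norm_nonneg _) (Ne.symm h0)
    have hlog : Real.log ‖deriv ((fun z : ℂ => z ^ 2 + c)^[n]) c - lam.eval c‖ ≤
        (2 ^ n : ℕ) * Real.log A := by
      rw [← hApow]
      exact Real.log_le_log hpos htot
    have h2n : (0:ℝ) < (2:ℝ) ^ n := by positivity
    rw [inv_mul_le_iff₀ h2n]
    calc Real.log ‖deriv ((fun z : ℂ => z ^ 2 + c)^[n]) c - lam.eval c‖
        ≤ (2 ^ n : ℕ) * Real.log A := hlog
      _ = (2:ℝ) ^ n * Real.log A := by push_cast; ring
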